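/- Let Q be a finite type, I, F ⊆ Q, and let Δ assign to every pair (p, q) ∈ Q × Q a regular language Δ(p, q) over a finite alphabet Σ. Then the language accepted by the generalised finite automaton (Q, I, F, Δ) — namely, the set of words u such that there exist k ≥ 0, states q_0 ∈ I, q_1, …, q_k with q_k ∈ F, and a factorization u = u_1 ++ ⋯ ++ u_k with u_i ∈ Δ(q_{i−1}, q_i) for all 1 ≤ i ≤ k — is a regular language. -/

import Mathlib

/-- The language accepted by the generalised finite automaton `(Q, I, F, Δ)`:
words `u` that factor as `u = u_1 ++ ⋯ ++ u_k` along a path of states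
`q_0 ∈ I, q_1, …, q_k ∈ F` with `u_i ∈ Δ (q_{i-1}) (q_i)`
(for `k = 0`, `u` is empty and the single state lies in `I ∩ F`). -/
def GFALanguage {α Q : Type} (I F : Set Q) (Δ : Q → Q → Language α) :
    Language α :=
  {u | ∃ (k : ℕ) (q : Fin (k + 1) → Q) (us : Fin k → List α),
        q 0 ∈ I ∧ q (Fin.last k) ∈ F ∧
        u = (List.ofFn us).flatten ∧
        ∀ i : Fin k, us i ∈ Δ (q i.castSucc) (q i.succ)}


open Set

namespace εNFA

variable {α : Type*} {σ : Type*} {M : εNFA α σ}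

/-- A walk in an εNFA from one state to another reading a word. -/
inductive Walk (M : εNFA α σ) : σ → List α → σ → Prop
  | nil (s : σ) : Walk M s [] s
  | eps {s t u : σ} {x : List α} : t ∈ M.step s none → Walk M t x u → Walk M s x u
  | char {s t u : σ} {a : α} {x : List α} :
      t ∈ M.step s (some a) → Walk M t x u → Walk M s (a :: x) u

theorem Walk.trans {s t : σ} {x : List α} (h1 : M.Walk s x t) :
    ∀ {y : List α} {u : σ}, M.Walk t y u → M.Walk s (x ++ y) u := by
  induction h1 with
  | nil => exact fun h => h
  | eps h _ ih => exact fun h2 => .eps h (ih h2)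
  | char h _ ih => exact fun h2 => .char h (ih h2)

theorem Walk.mem_εClosure_of_walk {S : Set σ} {s t : σ} {x : List α}
    (w : M.Walk s x t) (hx : x = []) (hs : s ∈ M.εClosure S) : t ∈ M.εClosure S := by
  induction w with
  | nil => exact hs
  | eps h _ ih => exact ih hx (εClosure.step _ _ h hs)
  | char h _ ih => simp at hx

theorem mem_εClosure_iff_walk {S : Set σ} {t : σ} :
    t ∈ M.εClosure S ↔ ∃ s ∈ S, M.Walk s [] t := by
  constructor
  · intro h
    induction h with
    | base s hs => exact ⟨s, hs, .nil s⟩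
    | step s t ht _ ih =>
      obtain ⟨s₀, h₀, w⟩ := ih
      exact ⟨s₀, h₀, w.trans (.eps ht (.nil t))⟩
  · rintro ⟨s, hs, w⟩
    exact w.mem_εClosure_of_walk rfl (M.subset_εClosure S hs)

theorem εClosure_mono {S T : Set σ} (h : S ⊆ T) : M.εClosure S ⊆ M.εClosure T := by
  intro t ht
  rw [mem_εClosure_iff_walk] at ht ⊢
  obtain ⟨s, hs, w⟩ := ht
  exact ⟨s, h hs, w⟩

theorem εClosure_idem (S : Set σ) : M.εClosure (M.εClosure S) = M.εClosure S := by
  refine Subset.antisymm ?_ (M.subset_εClosure _)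
  intro t ht
  induction ht with
  | base s hs => exact hs
  | step s t ht _ ih => exact εClosure.step _ _ ht ih

theorem stepSet_mono {S T : Set σ} (h : S ⊆ T) (a : α) : M.stepSet S a ⊆ M.stepSet T a := by
  intro t ht
  rw [mem_stepSet_iff] at ht ⊢
  obtain ⟨s, hs, hts⟩ := ht
  exact ⟨s, h hs, hts⟩

theorem foldl_stepSet_mono {S T : Set σ} (h : S ⊆ T) (x : List α) :
    List.foldl M.stepSet S x ⊆ List.foldl M.stepSet T x := by
  induction x generalizing S T with
  | nil => exact h
  | cons a x ih => exact ih (stepSet_mono h a)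

theorem εClosure_stepSet (S : Set σ) (a : α) : M.εClosure (M.stepSet S a) = M.stepSet S a := by
  refine Subset.antisymm ?_ (M.subset_εClosure _)
  intro t ht
  induction ht with
  | base s hs => exact hs
  | step s t ht _ ih =>
    rw [mem_stepSet_iff] at ih ⊢
    obtain ⟨u, hu, hsu⟩ := ih
    exact ⟨u, hu, εClosure.step _ _ ht hsu⟩

theorem Walk.mem_evalFrom {s t : σ} {x : List α} (w : M.Walk s x t) :
    ∀ {S : Set σ}, s ∈ S → t ∈ M.evalFrom S x := by
  induction w with
  | nil s => exact fun hs => M.subset_εClosure _ hs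
  | @eps s t u x h _ ih =>
    intro S hs
    have ht : t ∈ M.εClosure S := εClosure.step _ _ h (M.subset_εClosure _ hs)
    have h1 : u ∈ M.evalFrom (M.εClosure S) x := ih ht
    have h2 : M.evalFrom (M.εClosure S) x ⊆ M.evalFrom S x := by
      unfold evalFrom
      rw [εClosure_idem]
    exact h2 h1
  | @char s t u a x h _ ih =>
    intro S hs
    have ht : t ∈ M.stepSet (M.εClosure S) a :=
      mem_stepSet_iff.2 ⟨s, M.subset_εClosure _ hs, M.subset_εClosure _ h⟩
    have h1 : u ∈ M.evalFrom (M.stepSet (M.εClosure S) a) x := ih ht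
    have h2 : M.evalFrom (M.stepSet (M.εClosure S) a) x
        = M.evalFrom S (a :: x) := by
      unfold evalFrom
      rw [εClosure_stepSet, List.foldl_cons]
    rwa [h2] at h1

theorem mem_evalFrom_iff_walk {S : Set σ} {x : List α} {t : σ} :
    t ∈ M.evalFrom S x ↔ ∃ s ∈ S, M.Walk s x t := by
  induction x generalizing S with
  | nil => exact mem_εClosure_iff_walk
  | cons a x ih =>
    constructor
    · intro h
      have h' : t ∈ M.evalFrom (M.stepSet (M.εClosure S) a) x := by
        unfold evalFrom at h ⊢
        rw [εClosure_stepSet]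
        rwa [List.foldl_cons] at h
      obtain ⟨s₁, hs₁, w₁⟩ := ih.mp h'
      rw [mem_stepSet_iff] at hs₁
      obtain ⟨s₂, hs₂, hs₁⟩ := hs₁
      rw [mem_εClosure_iff_walk] at hs₁
      obtain ⟨s₃, hs₃, w₀⟩ := hs₁
      rw [mem_εClosure_iff_walk] at hs₂
      obtain ⟨s₀, hs₀, wε⟩ := hs₂
      exact ⟨s₀, hs₀, wε.trans (Walk.char hs₃ (w₀.trans w₁))⟩
    · rintro ⟨s, hs, w⟩
      exact w.mem_evalFrom hs

theorem mem_accepts_iff_walk {x : List α} :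
    x ∈ M.accepts ↔ ∃ s ∈ M.start, ∃ t ∈ M.accept, M.Walk s x t := by
  constructor
  · rintro ⟨t, ht, hev⟩
    obtain ⟨s, hs, w⟩ := mem_evalFrom_iff_walk.mp hev
    exact ⟨s, hs, t, ht, w⟩
  · rintro ⟨s, hs, t, ht, w⟩
    exact ⟨t, ht, mem_evalFrom_iff_walk.mpr ⟨s, hs, w⟩⟩

end εNFA

namespace GFAAux

variable {α Q : Type}

/-- Inductive description of accepting paths of a GFA starting from a given state. -/
inductive GFAPath (F : Set Q) (Δ : Q → Q → Language α) : Q → List α → Prop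
  | nil {p : Q} : p ∈ F → GFAPath F Δ p []
  | cons {p q : Q} {u v : List α} :
      u ∈ Δ p q → GFAPath F Δ q v → GFAPath F Δ p (u ++ v)

/-- State space of the εNFA simulating the GFA. -/
def GFAState (St : Q → Q → Type) : Type :=
  Option ((pq : Q × Q) × St pq.1 pq.2)

theorem gfaPath_ofFn (F : Set Q) (Δ : Q → Q → Language α) :
    ∀ (k : ℕ) (q : Fin (k + 1) → Q) (us : Fin k → List α),
      q (Fin.last k) ∈ F → (∀ i : Fin k, us i ∈ Δ (q i.castSucc) (q i.succ)) →
      GFAPath F Δ (q 0) (List.ofFn us).flatten := by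
  intro k
  induction k with
  | zero =>
    intro q us hF _
    simp only [List.ofFn_zero, List.flatten_nil]
    exact .nil (by simpa [Fin.last] using hF)
  | succ k ih =>
    intro q us hF hus
    have h0 : (List.ofFn us).flatten
        = us 0 ++ (List.ofFn fun i : Fin k => us i.succ).flatten := by
      rw [List.ofFn_succ, List.flatten_cons]
    rw [h0]
    have hpath : GFAPath F Δ (q (Fin.succ 0)) (List.ofFn fun i : Fin k => us i.succ).flatten := by
      refine ih (fun i => q i.succ) (fun i => us i.succ) ?_ ?_
      · show q (Fin.last k).succ ∈ F
        rw [Fin.succ_last]; exact hF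
      · intro i
        have := hus i.succ
        rwa [← Fin.succ_castSucc] at this
    have h1 : us 0 ∈ Δ (q 0) (q (Fin.succ 0)) := by
      have := hus 0
      rwa [Fin.castSucc_zero] at this
    exact .cons h1 hpath

theorem gfaPath_exists_ofFn {F : Set Q} {Δ : Q → Q → Language α} {p : Q} {x : List α}
    (h : GFAPath F Δ p x) :
    ∃ (k : ℕ) (q : Fin (k + 1) → Q) (us : Fin k → List α),
      q 0 = p ∧ q (Fin.last k) ∈ F ∧ x = (List.ofFn us).flatten ∧
      ∀ i : Fin k, us i ∈ Δ (q i.castSucc) (q i.succ) := by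
  induction h with
  | @nil p hp =>
    exact ⟨0, fun _ => p, Fin.elim0, rfl, hp, by simp, fun i => i.elim0⟩
  | @cons p q u v hu _ ih =>
    obtain ⟨k, qf, us, h0, hF, hx, hus⟩ := ih
    refine ⟨k + 1, Fin.cases p qf, Fin.cases u us, ?_, ?_, ?_, ?_⟩
    · simp
    · rw [← Fin.succ_last]; simp only [Fin.cases_succ]; exact hF
    · have : (fun i : Fin k => (Fin.cases u us : ∀ _ : Fin (k+1), List α) i.succ) = us :=
        funext fun i => by simp
      rw [List.ofFn_succ, this, Fin.cases_zero, List.flatten_cons, hx]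
    · intro i
      induction i using Fin.cases with
      | zero =>
        simp only [Fin.castSucc_zero, Fin.cases_zero, Fin.cases_succ, h0]
        exact hu
      | succ j =>
        simp only [← Fin.succ_castSucc, Fin.cases_succ]
        exact hus j

theorem mem_gfaLanguage_iff {I F : Set Q} {Δ : Q → Q → Language α} {x : List α} :
    x ∈ GFALanguage I F Δ ↔ ∃ p ∈ I, GFAPath F Δ p x := by
  constructor
  · rintro ⟨k, q, us, hI, hF, rfl, hus⟩
    exact ⟨q 0, hI, gfaPath_ofFn F Δ k q us hF hus⟩
  · rintro ⟨p, hp, hpath⟩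
    obtain ⟨k, q, us, h0, hF, hx, hus⟩ := gfaPath_exists_ofFn hpath
    exact ⟨k, q, us, h0 ▸ hp, hF, hx, hus⟩

variable (I F : Set Q) (St : Q → Q → Type) (M : ∀ p q, DFA α (St p q))

/-- The εNFA simulating a GFA whose transition languages are given by the DFAs `M p q`. -/
def gfaAuto : εNFA α (GFAState St) where
  step := fun t a =>
    match t, a with
    | none, none => fun t' => ∃ p ∈ I, ∃ q, t' = some ⟨(p, q), (M p q).start⟩
    | none, some _ => ∅
    | some ⟨(p, q), s⟩, none =>
        fun t' => s ∈ (M p q).accept ∧ ∃ r, t' = some ⟨(q, r), (M q r).start⟩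
    | some ⟨(p, q), s⟩, some a => {some ⟨(p, q), (M p q).step s a⟩}
  start := {none}
  accept := fun t =>
    match t with
    | none => (I ∩ F).Nonempty
    | some ⟨(p, q), s⟩ => s ∈ (M p q).accept ∧ q ∈ F

theorem gfaAuto_walk_seg (p q : Q) (w : List α) :
    ∀ s : St p q,
      (gfaAuto I F St M).Walk (some ⟨(p, q), s⟩) w (some ⟨(p, q), (M p q).evalFrom s w⟩) := by
  induction w with
  | nil => exact fun s => .nil _
  | cons a w ih =>
    intro s
    exact .char (show _ ∈ _ from rfl) (ih ((M p q).step s a))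

variable {Δ : Q → Q → Language α}

theorem gfaAuto_walk_of_path (hM : ∀ p q, (M p q).accepts = Δ p q) {q : Q} {v : List α}
    (h : GFAPath F Δ q v) :
    ∀ (p : Q) (s : St p q), s ∈ (M p q).accept →
      ∃ t ∈ (gfaAuto I F St M).accept, (gfaAuto I F St M).Walk (some ⟨(p, q), s⟩) v t := by
  induction h with
  | @nil q hq =>
    intro p s hs
    exact ⟨some ⟨(p, q), s⟩, ⟨hs, hq⟩, .nil _⟩
  | @cons q r u v hu _ ih =>
    intro p s hs
    have hu' : (M q r).evalFrom (M q r).start u ∈ (M q r).accept :=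
      ((M q r).mem_accepts).mp ((hM q r).symm ▸ hu)
    obtain ⟨t, ht, w⟩ := ih q ((M q r).evalFrom (M q r).start u) hu'
    exact ⟨t, ht, .eps (show _ ∈ _ from ⟨hs, r, rfl⟩)
      ((gfaAuto_walk_seg I F St M q r u (M q r).start).trans w)⟩

/-- Invariant describing the words that can be read from a given state to acceptance. -/
def gfaInv (x : List α) : GFAState St → Prop := fun t =>
  match t with
  | none => ∃ p ∈ I, GFAPath F Δ p x
  | some ⟨(p, q), s⟩ =>
      ∃ w v, x = w ++ v ∧ (M p q).evalFrom s w ∈ (M p q).accept ∧ GFAPath F Δ q v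

theorem gfaAuto_inv (hM : ∀ p q, (M p q).accepts = Δ p q) {t : GFAState St} {x : List α}
    {t' : GFAState St} (w : (gfaAuto I F St M).Walk t x t')
    (ht' : t' ∈ (gfaAuto I F St M).accept) :
    gfaInv I F St M (Δ := Δ) x t := by
  induction w with
  | nil t =>
    rcases t with _ | ⟨⟨p, q⟩, s⟩
    · obtain ⟨p, hp⟩ := (ht' : (I ∩ F).Nonempty)
      exact ⟨p, hp.1, .nil hp.2⟩
    · obtain ⟨hs, hq⟩ := (ht' : _ ∧ _)
      exact ⟨[], [], rfl, hs, .nil hq⟩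
  | @eps t t₁ u x h _ ih =>
    rcases t with _ | ⟨⟨p, q⟩, s⟩
    · obtain ⟨p, hp, q, rfl⟩ := h
      obtain ⟨w, v, hx, hacc, hpath⟩ := ih ht'
      have hw : w ∈ Δ p q := (hM p q) ▸ ((M p q).mem_accepts).mpr hacc
      exact ⟨p, hp, hx ▸ .cons hw hpath⟩
    · obtain ⟨hs, r, rfl⟩ := h
      obtain ⟨w, v, hx, hacc, hpath⟩ := ih ht'
      have hw : w ∈ Δ q r := (hM q r) ▸ ((M q r).mem_accepts).mpr hacc
      exact ⟨[], x, rfl, hs, hx ▸ .cons hw hpath⟩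
  | @char t t₁ u a x h _ ih =>
    rcases t with _ | ⟨⟨p, q⟩, s⟩
    · exact absurd h (fun h => h)
    · have ht₁ : t₁ = some ⟨(p, q), (M p q).step s a⟩ := h
      subst ht₁
      obtain ⟨w, v, hx, hacc, hpath⟩ := ih ht'
      exact ⟨a :: w, v, by rw [hx]; rfl, hacc, hpath⟩

theorem gfaAuto_accepts (hM : ∀ p q, (M p q).accepts = Δ p q) {x : List α} :
    x ∈ (gfaAuto I F St M).accepts ↔ ∃ p ∈ I, GFAPath F Δ p x := by
  rw [εNFA.mem_accepts_iff_walk]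
  constructor
  · rintro ⟨s, hs, t, ht, w⟩
    obtain rfl : s = none := hs
    exact gfaAuto_inv I F St M hM w ht
  · rintro ⟨p, hp, hpath⟩
    cases hpath with
    | nil hpF =>
      exact ⟨none, rfl, none, show (I ∩ F).Nonempty from ⟨p, hp, hpF⟩, .nil none⟩
    | @cons p q u v hu hpath' =>
      have hu' : (M p q).evalFrom (M p q).start u ∈ (M p q).accept :=
        ((M p q).mem_accepts).mp ((hM p q).symm ▸ hu)
      obtain ⟨t, ht, w⟩ := gfaAuto_walk_of_path I F St M hM hpath' p _ hu'
      exact ⟨none, rfl, t, ht, .eps (show _ ∈ _ from ⟨p, hp, q, rfl⟩)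
        ((gfaAuto_walk_seg I F St M p q u (M p q).start).trans w)⟩

end GFAAux


theorem gfaLanguage_isRegular
    {α Q : Type} [Fintype α] [Fintype Q]
    (I F : Set Q) (Δ : Q → Q → Language α)
    (hΔ : ∀ p q, (Δ p q).IsRegular) :
    (GFALanguage I F Δ).IsRegular := by
  classical
  have hΔ' : ∀ p q, ∃ σ : Type, ∃ _ : Fintype σ, ∃ M : DFA α σ, M.accepts = Δ p q := hΔ
  choose St instF M hM using hΔ'
  haveI : ∀ pq : Q × Q, Fintype (St pq.1 pq.2) := fun pq => instF pq.1 pq.2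
  haveI : Finite (GFAAux.GFAState St) := by
    unfold GFAAux.GFAState; infer_instance
  haveI : Fintype (Set (GFAAux.GFAState St)) := Fintype.ofFinite _
  refine ⟨Set (GFAAux.GFAState St), inferInstance,
    ((GFAAux.gfaAuto I F St M).toNFA).toDFA, ?_⟩
  rw [NFA.toDFA_correct, εNFA.toNFA_correct]
  ext x
  rw [GFAAux.mem_gfaLanguage_iff]
  exact GFAAux.gfaAuto_accepts I F St M hM
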